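/- Lemma (sign and magnitude of λ_3). Let ℓ, c, r_x, β > 0 and γ ∈ (0,1) with c·r_x < 1 and (A_3 + B_3·β)² ≥ 4·ℓ·c·β·γ. Then λ_3 < 0 and ℓ·c·γ·β/(A_3 + B_3·β) ≤ −λ_3 ≤ 2·ℓ·c·γ·β/(A_3 + B_3·β). -/
import Mathlib


noncomputable section

/-- `A₃ = ℓcγ + c r_x`. -/
def A3 (l c rx γ : ℝ) : ℝ := l * c * γ + c * rx

/-- `B₃ = 1 − c r_x`. -/
def B3 (c rx : ℝ) : ℝ := 1 - c * rx

/-- `λ₃ = −(A₃ + B₃β)/2 + (1/2)·√((A₃ + B₃β)² − 4ℓcβγ)`. -/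
def lam3 (l c rx γ β : ℝ) : ℝ :=
  -(A3 l c rx γ + B3 c rx * β) / 2 +
    Real.sqrt ((A3 l c rx γ + B3 c rx * β) ^ 2 - 4 * l * c * β * γ) / 2

/-- Sign and magnitude of the eigenvalue `λ₃` of the frozen-dual recursion of
Perturbed Smoothed GDA on the hard OS instance. -/
theorem lam3_sign_and_magnitude
    (l c rx β γ : ℝ)
    (hl : 0 < l) (hc : 0 < c) (hrx : 0 < rx) (hβ : 0 < β)
    (hγ : γ ∈ Set.Ioo (0 : ℝ) 1) (hcrx : c * rx < 1)
    (hdisc : (A3 l c rx γ + B3 c rx * β) ^ 2 ≥ 4 * l * c * β * γ) :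
    lam3 l c rx γ β < 0 ∧
    l * c * γ * β / (A3 l c rx γ + B3 c rx * β) ≤ -(lam3 l c rx γ β) ∧
    -(lam3 l c rx γ β) ≤ 2 * l * c * γ * β / (A3 l c rx γ + B3 c rx * β) := by
  obtain ⟨hγ0, hγ1⟩ := hγ
  set S : ℝ := A3 l c rx γ + B3 c rx * β with hS
  set K : ℝ := l * c * β * γ with hK
  have hK0 : 0 < K := by positivity
  have hS0 : 0 < S := by
    have hA : 0 < A3 l c rx γ := by unfold A3; positivity
    have hB : 0 < B3 c rx := by unfold B3; linarith
    have : 0 < B3 c rx * β := mul_pos hB hβ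
    linarith
  have hDnn : (0:ℝ) ≤ S ^ 2 - 4 * l * c * β * γ := by linarith [hdisc]
  set s : ℝ := Real.sqrt (S ^ 2 - 4 * l * c * β * γ) with hs
  have hsnn : 0 ≤ s := Real.sqrt_nonneg _
  have hsq : s ^ 2 = S ^ 2 - 4 * K := by
    rw [hs, Real.sq_sqrt hDnn]; ring
  have hsltS : s < S := by
    nlinarith [hsnn, hsq, hK0]
  have hlam : lam3 l c rx γ β = -S / 2 + s / 2 := rfl
  have hneg : lam3 l c rx γ β < 0 := by rw [hlam]; linarith
  have hprod : (S - s) * (S + s) = 4 * K := by nlinarith [hsq]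
  have hSs0 : 0 < S + s := by linarith
  have hval : -(lam3 l c rx γ β) = 2 * K / (S + s) := by
    rw [hlam]
    field_simp
    nlinarith [hprod]
  refine ⟨hneg, ?_, ?_⟩
  · rw [hval]
    rw [div_le_div_iff₀ hS0 hSs0]
    have hKeq : l * c * γ * β = K := by rw [hK]; ring
    rw [hKeq]
    nlinarith [hsltS, hK0.le]
  · rw [hval]
    rw [div_le_div_iff₀ hSs0 hS0]
    have hKeq : 2 * l * c * γ * β = 2 * K := by rw [hK]; ring
    rw [hKeq]
    nlinarith [hsnn, hK0.le]
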